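/- arXiv:2210.12862 — 5 statements merged into one kernel-verified Lean document; each statement's English description precedes it below -/
import Mathlib

section
/- Under the setup of the previous statement, with $\eta = \Sigma_{Z|Y}^{-1}(\alpha_1-\alpha_0)$, $\eta_0 = -\tfrac12(\alpha_0+\alpha_1)^\top\eta + \log(\pi_1/\pi_0)$, $\beta^a = a\,\Sigma_Z^{-1}(\alpha_1-\alpha_0)$, and $\beta_0^a = -\tfrac12(\alpha_0+\alpha_1)^\top\beta^a + [a - \pi_0\pi_1(\alpha_1-\alpha_0)^\top\beta^a]\log(\pi_1/\pi_0)$: for every $z\in\mathbb{R}^K$ and every $a>0$, $z^\top\eta + \eta_0 \ge 0$ if and only if $z^\top\beta^a + \beta_0^a \ge 0$. -/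
open Matrix

lemma vecMulVec_mulVec' {K : ℕ} (d x : Fin K → ℝ) :
    (vecMulVec d d) *ᵥ x = (d ⬝ᵥ x) • d := by
  ext i
  simp only [mulVec, dotProduct, vecMulVec_apply, Pi.smul_apply, smul_eq_mul,
    Finset.sum_mul]
  apply Finset.sum_congr rfl; intro j _
  ring

lemma vecMulVec_psd {K : ℕ} (c : ℝ) (hc : 0 ≤ c) (d : Fin K → ℝ) :
    (c • vecMulVec d d).PosSemidef := by
  refine posSemidef_iff_dotProduct_mulVec.mpr ⟨?_, ?_⟩
  · ext i j
    simp [vecMulVec_apply, mul_comm]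
  · intro x
    rw [smul_mulVec, dotProduct_smul, vecMulVec_mulVec', dotProduct_smul,
      smul_eq_mul, smul_eq_mul, star_trivial, dotProduct_comm]
    exact mul_nonneg hc (mul_self_nonneg _)

/-- Equivalence of the Bayes linear discriminant rule (within-class metric) and the
regression-based linear rule (unconditional metric): for every `z` and every `a > 0`,
`zᵀη + η0 ≥ 0 ↔ zᵀβᵃ + β0ᵃ ≥ 0`. -/
theorem stmt6 {K : ℕ} (SZY : Matrix (Fin K) (Fin K) ℝ) (hZY : SZY.PosDef)
    (π0 π1 : ℝ) (h0 : 0 < π0) (h1 : 0 < π1) (hsum : π0 + π1 = 1)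
    (α0 α1 : Fin K → ℝ)
    (SZ : Matrix (Fin K) (Fin K) ℝ)
    (hSZ : SZ = SZY + (π0 * π1) • vecMulVec (α1 - α0) (α1 - α0))
    (η : Fin K → ℝ) (hη : η = SZY⁻¹.mulVec (α1 - α0))
    (η0 : ℝ) (hη0 : η0 = -(1/2) * ((α0 + α1) ⬝ᵥ η) + Real.log (π1 / π0)) :
    ∀ a : ℝ, 0 < a → ∀ z : Fin K → ℝ,
      ∀ βa : Fin K → ℝ, βa = a • SZ⁻¹.mulVec (α1 - α0) →
      ∀ β0a : ℝ, β0a = -(1/2) * ((α0 + α1) ⬝ᵥ βa)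
          + (a - π0 * π1 * ((α1 - α0) ⬝ᵥ βa)) * Real.log (π1 / π0) →
      (0 ≤ z ⬝ᵥ η + η0 ↔ 0 ≤ z ⬝ᵥ βa + β0a) := by
  intro a ha z βa hβa β0a hβ0a
  set d : Fin K → ℝ := α1 - α0 with hd
  set c : ℝ := π0 * π1 with hcdef
  have hc : 0 < c := mul_pos h0 h1
  set Δ2 : ℝ := d ⬝ᵥ η with hΔ2
  -- η maps back to d under SZY
  have hηd : SZY *ᵥ η = d := by
    rw [hη, mulVec_mulVec, Matrix.mul_nonsing_inv _ hZY.det_pos.ne'.isUnit, one_mulVec]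
  -- Δ2 is nonnegative
  have hΔ2nn : 0 ≤ Δ2 := by
    have h := (hZY.inv.posSemidef).dotProduct_mulVec_nonneg d
    simpa [hΔ2, hη, star_trivial] using h
  have hden : 0 < 1 + c * Δ2 := by positivity
  -- SZ is invertible
  have hSZpd : SZ.PosDef := by
    rw [hSZ]
    exact hZY.add_posSemidef (vecMulVec_psd c hc.le d)
  -- SZ *ᵥ η = (1 + c·Δ2) • d
  have hSZη : SZ *ᵥ η = (1 + c * Δ2) • d := by
    rw [hSZ, add_mulVec, hηd, smul_mulVec, vecMulVec_mulVec', ← hΔ2]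
    ext i
    simp only [Pi.add_apply, Pi.smul_apply, smul_eq_mul]
    ring
  -- hence SZ⁻¹ *ᵥ d = (1 + c·Δ2)⁻¹ • η
  have hSZinvd : SZ⁻¹ *ᵥ d = (1 + c * Δ2)⁻¹ • η := by
    have h1' : SZ⁻¹ *ᵥ (SZ *ᵥ η) = η := by
      rw [mulVec_mulVec, Matrix.nonsing_inv_mul _ hSZpd.det_pos.ne'.isUnit, one_mulVec]
    rw [hSZη, mulVec_smul] at h1'
    rw [← h1', smul_smul, inv_mul_cancel₀ hden.ne', one_smul]
  set t : ℝ := a * (1 + c * Δ2)⁻¹ with htdef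
  have ht : 0 < t := by positivity
  have hβaη : βa = t • η := by
    rw [hβa, hSZinvd, smul_smul]
  -- key scalar computation: a - c * (d ⬝ᵥ βa) = t
  have hdβa : d ⬝ᵥ βa = t * Δ2 := by
    rw [hβaη, dotProduct_smul, hΔ2]; rfl
  have hkey : a - c * (d ⬝ᵥ βa) = t := by
    rw [hdβa, htdef]
    field_simp
    ring
  have hβ0t : β0a = t * η0 := by
    rw [hβ0a, hη0, hkey, hβaη, dotProduct_smul, smul_eq_mul]
    ring
  have hz : z ⬝ᵥ βa = t * (z ⬝ᵥ η) := by
    rw [hβaη, dotProduct_smul, smul_eq_mul]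
  rw [hz, hβ0t, ← mul_add]
  constructor
  · intro h; exact mul_nonneg ht.le h
  · intro h; exact nonneg_of_mul_nonneg_right h ht
end

section
/- Let $A$ be a $p\times K$ matrix of rank $K$, $\Sigma_{Z|Y}\succ 0$ a $K\times K$ matrix, $\Sigma_W \succ 0$ a $p\times p$ matrix, and $\alpha_0,\alpha_1\in\mathbb{R}^K$. Define $\Delta^2 = (\alpha_1-\alpha_0)^\top\Sigma_{Z|Y}^{-1}(\alpha_1-\alpha_0)$ and $\Delta_x^2 = (\alpha_1-\alpha_0)^\top A^\top(A\Sigma_{Z|Y}A^\top + \Sigma_W)^{-1}A(\alpha_1-\alpha_0)$. Then $\Delta^2 - \Delta_x^2 = (\alpha_1-\alpha_0)^\top\Sigma_{Z|Y}^{-1/2}\big(I_K + \Sigma_{Z|Y}^{1/2}A^\top\Sigma_W^{-1}A\Sigma_{Z|Y}^{1/2}\big)^{-1}\Sigma_{Z|Y}^{-1/2}(\alpha_1-\alpha_0)$; in particular $0 \le \Delta^2 - \Delta_x^2 \le \frac{\Delta^2}{1+\lambda_K(H)}$ where $H = \Sigma_{Z|Y}^{1/2}A^\top\Sigma_W^{-1}A\Sigma_{Z|Y}^{1/2}$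 and $\lambda_K(H)$ is its smallest eigenvalue. -/
open Matrix

private lemma aux_ident {K : ℕ} (R B H M S : Matrix (Fin K) (Fin K) ℝ)
    (hRu : IsUnit R.det) (hS : S = R * R)
    (hH : H = R * B * R) (hM : M = S⁻¹ + B) (hMu : IsUnit M.det) :
    S⁻¹ - (B - B * M⁻¹ * B) = R⁻¹ * (1 + H)⁻¹ * R⁻¹ := by
  have hSi : S⁻¹ = R⁻¹ * R⁻¹ := by rw [hS, Matrix.mul_inv_rev]
  have hRRi : R * R⁻¹ = 1 := Matrix.mul_nonsing_inv R hRu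
  have hRiR : R⁻¹ * R = 1 := Matrix.nonsing_inv_mul R hRu
  have hM2 : M = R⁻¹ * (1 + H) * R⁻¹ := by
    rw [hM, hSi, hH]
    simp only [Matrix.mul_add, Matrix.add_mul, Matrix.mul_one, Matrix.mul_assoc]
    rw [hRRi, Matrix.mul_one, ← Matrix.mul_assoc R⁻¹ R B, hRiR, Matrix.one_mul]
  have hMi : M⁻¹ = R * (1 + H)⁻¹ * R := by
    rw [hM2, Matrix.mul_inv_rev, Matrix.mul_inv_rev, Matrix.nonsing_inv_nonsing_inv R hRu,
      Matrix.mul_assoc]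
  have hMM : M * M⁻¹ = 1 := Matrix.mul_nonsing_inv M hMu
  have hMM' : M⁻¹ * M = 1 := Matrix.nonsing_inv_mul M hMu
  have h1 : S⁻¹ = M - B := by rw [hM]; abel
  have e1 : (M - B) * M⁻¹ = 1 - B * M⁻¹ := by rw [Matrix.sub_mul, hMM]
  have e3 : B * M⁻¹ * M = B := by rw [Matrix.mul_assoc, hMM', Matrix.mul_one]
  have key : S⁻¹ - (B - B * M⁻¹ * B) = S⁻¹ * M⁻¹ * S⁻¹ := by
    rw [h1, e1, Matrix.sub_mul, Matrix.mul_sub, Matrix.mul_sub, Matrix.one_mul,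
      Matrix.one_mul, e3]
  rw [key, hSi, hMi]
  simp only [Matrix.mul_assoc]
  rw [Matrix.nonsing_inv_mul_cancel_left R _ hRu, Matrix.mul_nonsing_inv_cancel_left R _ hRu]

private lemma aux_eigen {K : ℕ} (hK : 0 < K) (H : Matrix (Fin K) (Fin K) ℝ)
    (hHerm : H.IsHermitian) (hpsd : H.PosSemidef) (u : Fin K → ℝ) :
    u ⬝ᵥ (1 + H)⁻¹ *ᵥ u ≤ (u ⬝ᵥ u) / (1 + ⨅ i, hHerm.eigenvalues i) := by
  haveI : Nonempty (Fin K) := ⟨⟨0, hK⟩⟩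
  set U : Matrix (Fin K) (Fin K) ℝ := (hHerm.eigenvectorUnitary : Matrix (Fin K) (Fin K) ℝ)
    with hU
  set lam := hHerm.eigenvalues with hlam
  have hnn : ∀ i, 0 ≤ lam i := fun i => hpsd.eigenvalues_nonneg i
  set lmin := ⨅ i, lam i with hlmin
  have hbdd : BddBelow (Set.range lam) := Set.Finite.bddBelow (Set.finite_range _)
  have hlmin_le : ∀ i, lmin ≤ lam i := fun i => ciInf_le hbdd i
  have hlmin_nn : 0 ≤ lmin := le_ciInf hnn
  have hpos : ∀ i, (0:ℝ) < 1 + lam i := fun i => by linarith [hnn i]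
  have hpos' : (0:ℝ) < 1 + lmin := by linarith
  have hUU : U * star U = 1 := (mem_unitaryGroup_iff).mp hHerm.eigenvectorUnitary.2
  have hUU' : star U * U = 1 := (mem_unitaryGroup_iff').mp hHerm.eigenvectorUnitary.2
  have hstar : star U = Uᵀ := by
    rw [star_eq_conjTranspose, conjTranspose_eq_transpose_of_trivial]
  have hspec : H = U * diagonal lam * Uᵀ := by
    rw [← hstar]
    convert hHerm.spectral_theorem using 3
    rw [Unitary.conjStarAlgAut_apply]; rfl
  have h1H : 1 + H = U * diagonal (fun i => 1 + lam i) * Uᵀ := by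
    rw [hspec, ← hstar]
    calc (1:Matrix (Fin K) (Fin K) ℝ) + U * diagonal lam * star U
        = U * 1 * star U + U * diagonal lam * star U := by
          rw [Matrix.mul_one, hUU]
      _ = U * (1 + diagonal lam) * star U := by
          simp only [Matrix.mul_add, Matrix.add_mul, Matrix.mul_one]
      _ = U * diagonal (fun i => 1 + lam i) * star U := by
          rw [← Matrix.diagonal_one, diagonal_add]
  have hinv : (1 + H)⁻¹ = U * diagonal (fun i => (1 + lam i)⁻¹) * Uᵀ := by
    apply Matrix.inv_eq_right_inv
    rw [h1H, ← hstar]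
    calc (U * diagonal (fun i => 1 + lam i) * star U) * (U * diagonal (fun i => (1 + lam i)⁻¹) * star U)
        = U * (diagonal (fun i => 1 + lam i) * (star U * U) * diagonal (fun i => (1 + lam i)⁻¹)) * star U := by
          simp only [Matrix.mul_assoc]
      _ = 1 := by
          rw [hUU', Matrix.mul_one, diagonal_mul_diagonal]
          have : (fun i => (1 + lam i) * (1 + lam i)⁻¹) = fun _ => (1:ℝ) := by
            funext i; exact mul_inv_cancel₀ (hpos i).ne'
          rw [this, diagonal_one, Matrix.mul_one, hUU]
  set y := Uᵀ *ᵥ u with hy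
  have hquad : u ⬝ᵥ (1 + H)⁻¹ *ᵥ u = ∑ i, (1 + lam i)⁻¹ * (y i * y i) := by
    rw [hinv, ← Matrix.mulVec_mulVec, ← Matrix.mulVec_mulVec, Matrix.dotProduct_mulVec,
      ← Matrix.mulVec_transpose]
    simp [hy, dotProduct, mulVec_diagonal, mul_comm, mul_left_comm]
  have hyy : y ⬝ᵥ y = u ⬝ᵥ u := by
    rw [hy, Matrix.dotProduct_mulVec, Matrix.vecMul_transpose, Matrix.mulVec_mulVec, ← hstar,
      hUU, Matrix.one_mulVec]
  have hbound : ∑ i, (1 + lam i)⁻¹ * (y i * y i) ≤ ∑ i, (1 + lmin)⁻¹ * (y i * y i) := by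
    apply Finset.sum_le_sum
    intro i _
    apply mul_le_mul_of_nonneg_right _ (mul_self_nonneg (y i))
    exact inv_anti₀ hpos' (by linarith [hlmin_le i])
  rw [hquad]
  refine hbound.trans ?_
  rw [← Finset.mul_sum]
  have : ∑ i, y i * y i = u ⬝ᵥ u := by rw [← hyy]; rfl
  rw [this, div_eq_mul_inv, mul_comm]

/-- Woodbury identity for the loss in Mahalanobis separation:
`Δ² - Δx² = (α1-α0)ᵀ Σ^{-1/2} (I + H)⁻¹ Σ^{-1/2} (α1-α0)` with
`H = Σ^{1/2} Aᵀ ΣW⁻¹ A Σ^{1/2}`, and `0 ≤ Δ² - Δx² ≤ Δ² / (1 + λ_K(H))`. -/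
theorem stmt8 {p K : ℕ} (hK : 0 < K)
    (A : Matrix (Fin p) (Fin K) ℝ) (hA : A.rank = K)
    (SZY : Matrix (Fin K) (Fin K) ℝ) (hZY : SZY.PosDef)
    (SW : Matrix (Fin p) (Fin p) ℝ) (hW : SW.PosDef)
    (α0 α1 : Fin K → ℝ)
    (R : Matrix (Fin K) (Fin K) ℝ) (hR : R = (hZY.posSemidef.1.eigenvectorUnitary : Matrix (Fin K) (Fin K) ℝ) *
      diagonal (Real.sqrt ∘ hZY.posSemidef.1.eigenvalues) *
      (star (hZY.posSemidef.1.eigenvectorUnitary : Matrix (Fin K) (Fin K) ℝ)))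
    (H : Matrix (Fin K) (Fin K) ℝ) (hH : H = R * Aᵀ * SW⁻¹ * A * R)
    (hHerm : H.IsHermitian)
    (Δ2 Δx2 : ℝ)
    (hΔ2 : Δ2 = (α1 - α0) ⬝ᵥ SZY⁻¹.mulVec (α1 - α0))
    (hΔx2 : Δx2 = (α1 - α0) ⬝ᵥ (Aᵀ * (A * SZY * Aᵀ + SW)⁻¹ * A).mulVec (α1 - α0)) :
    Δ2 - Δx2 = (α1 - α0) ⬝ᵥ (R⁻¹ * (1 + H)⁻¹ * R⁻¹).mulVec (α1 - α0)
    ∧ 0 ≤ Δ2 - Δx2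
    ∧ Δ2 - Δx2 ≤ Δ2 / (1 + (⨅ i, hHerm.eigenvalues i)) := by
  set v := α1 - α0 with hv
  -- basic facts about R
  have hRR : R * R = SZY := by
    rw [hR]
    have hUU' : star (hZY.posSemidef.1.eigenvectorUnitary : Matrix (Fin K) (Fin K) ℝ) *
        (hZY.posSemidef.1.eigenvectorUnitary : Matrix (Fin K) (Fin K) ℝ) = 1 :=
      (mem_unitaryGroup_iff').mp hZY.posSemidef.1.eigenvectorUnitary.2
    calc _ = (hZY.posSemidef.1.eigenvectorUnitary : Matrix (Fin K) (Fin K) ℝ) *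
          (diagonal (Real.sqrt ∘ hZY.posSemidef.1.eigenvalues) *
            (star (hZY.posSemidef.1.eigenvectorUnitary : Matrix (Fin K) (Fin K) ℝ) *
              (hZY.posSemidef.1.eigenvectorUnitary : Matrix (Fin K) (Fin K) ℝ)) *
            diagonal (Real.sqrt ∘ hZY.posSemidef.1.eigenvalues)) *
          star (hZY.posSemidef.1.eigenvectorUnitary : Matrix (Fin K) (Fin K) ℝ) := by
          simp only [Matrix.mul_assoc]
      _ = (hZY.posSemidef.1.eigenvectorUnitary : Matrix (Fin K) (Fin K) ℝ) *
          diagonal hZY.posSemidef.1.eigenvalues *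
          star (hZY.posSemidef.1.eigenvectorUnitary : Matrix (Fin K) (Fin K) ℝ) := by
          rw [hUU', Matrix.mul_one, diagonal_mul_diagonal]
          have hd : (fun i => (Real.sqrt ∘ hZY.posSemidef.1.eigenvalues) i *
              (Real.sqrt ∘ hZY.posSemidef.1.eigenvalues) i) = hZY.posSemidef.1.eigenvalues :=
            funext fun i => Real.mul_self_sqrt (hZY.posSemidef.eigenvalues_nonneg i)
          rw [hd]
      _ = SZY := by
          conv_rhs => rw [hZY.posSemidef.1.spectral_theorem]
          rw [Unitary.conjStarAlgAut_apply]; rfl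
  have hRHerm : R.IsHermitian := by
    rw [hR, star_eq_conjTranspose]
    exact isHermitian_mul_mul_conjTranspose _ (isHermitian_diagonal _)
  have hRu : IsUnit R.det := by
    have hdet : R.det * R.det = SZY.det := by rw [← Matrix.det_mul, hRR]
    have : SZY.det ≠ 0 := hZY.det_pos.ne'
    have hRdet : R.det ≠ 0 := fun h => this (by rw [← hdet, h, zero_mul])
    exact hRdet.isUnit
  have hRiT : R⁻¹ᵀ = R⁻¹ := by
    have := hRHerm.inv.eq
    rwa [conjTranspose_eq_transpose_of_trivial] at this
  -- B, M, H facts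
  set B := Aᵀ * SW⁻¹ * A with hB
  have hBpsd : B.PosSemidef := by
    have := hW.inv.posSemidef.conjTranspose_mul_mul_same A
    rwa [conjTranspose_eq_transpose_of_trivial] at this
  set M := SZY⁻¹ + B with hM
  have hMpd : M.PosDef := hZY.inv.add_posSemidef hBpsd
  have hH' : H = R * B * R := by rw [hH, hB]; simp only [Matrix.mul_assoc]
  have hHpsd : H.PosSemidef := by
    have := hBpsd.conjTranspose_mul_mul_same R
    rwa [hRHerm.eq, ← hH'] at this
  -- Woodbury
  have hwood : Aᵀ * (A * SZY * Aᵀ + SW)⁻¹ * A = B - B * M⁻¹ * B := by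
    have hw : (SW + A * SZY * Aᵀ)⁻¹ = SW⁻¹ - SW⁻¹ * A * M⁻¹ * Aᵀ * SW⁻¹ := by
      have := Matrix.add_mul_mul_inv_eq_sub SW A SZY Aᵀ hW.isUnit hZY.isUnit hMpd.isUnit
      rw [this]
    rw [add_comm (A * SZY * Aᵀ) SW, hw]
    simp only [Matrix.mul_sub, Matrix.sub_mul, Matrix.mul_assoc, hB]
  -- the matrix identity
  have hident : SZY⁻¹ - Aᵀ * (A * SZY * Aᵀ + SW)⁻¹ * A = R⁻¹ * (1 + H)⁻¹ * R⁻¹ := by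
    rw [hwood]
    exact aux_ident R B H M SZY hRu hRR.symm hH' hM
      ((Matrix.isUnit_iff_isUnit_det M).mp hMpd.isUnit)
  -- part 1
  have part1 : Δ2 - Δx2 = v ⬝ᵥ (R⁻¹ * (1 + H)⁻¹ * R⁻¹).mulVec v := by
    rw [hΔ2, hΔx2, ← dotProduct_sub, ← Matrix.sub_mulVec, hident]
  -- express via u
  set u := R⁻¹ *ᵥ v with hu
  have hconv : v ⬝ᵥ (R⁻¹ * (1 + H)⁻¹ * R⁻¹).mulVec v = u ⬝ᵥ (1 + H)⁻¹ *ᵥ u := by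
    rw [← Matrix.mulVec_mulVec, ← Matrix.mulVec_mulVec, Matrix.dotProduct_mulVec,
      ← Matrix.mulVec_transpose, hRiT, hu]
  have hΔ2u : Δ2 = u ⬝ᵥ u := by
    rw [hΔ2, show SZY⁻¹ = R⁻¹ * R⁻¹ by rw [← hRR, Matrix.mul_inv_rev],
      ← Matrix.mulVec_mulVec, Matrix.dotProduct_mulVec, ← Matrix.mulVec_transpose, hRiT, hu]
  refine ⟨part1, ?_, ?_⟩
  · -- nonnegativity
    rw [part1, hconv]
    have hpd : ((1 : Matrix (Fin K) (Fin K) ℝ) + H).PosDef := Matrix.PosDef.one.add_posSemidef hHpsd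
    have := hpd.inv.posSemidef.dotProduct_mulVec_nonneg u
    simpa using this
  · calc Δ2 - Δx2 = u ⬝ᵥ (1 + H)⁻¹ *ᵥ u := part1.trans hconv
      _ ≤ (u ⬝ᵥ u) / (1 + ⨅ i, hHerm.eigenvalues i) := aux_eigen hK H hHerm hHpsd u
      _ = Δ2 / (1 + ⨅ i, hHerm.eigenvalues i) := by rw [hΔ2u]
end

section
/- With $\Delta$, $\Delta_x$, and $H$ as above, and $\xi^* := \lambda_K(A\Sigma_{Z|Y}A^\top)/\lambda_1(\Sigma_W)$: one has $\lambda_K(H) \ge \xi^*$ and $\Delta^2 \ge \Delta_x^2 \ge \Delta^2\,\dfrac{\xi^*}{1+\xi^*}$. -/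
open Matrix

section Aux

variable {n : ℕ}

lemma aux_spectral {M : Matrix (Fin n) (Fin n) ℝ} (hM : M.IsHermitian) :
    ∃ U : Matrix (Fin n) (Fin n) ℝ, U * star U = 1 ∧ star U * U = 1 ∧
      M = U * diagonal hM.eigenvalues * star U := by
  refine ⟨hM.eigenvectorUnitary, ?_, ?_, by simpa using hM.spectral_theorem⟩
  · exact Matrix.mem_unitaryGroup_iff.mp hM.eigenvectorUnitary.2
  · exact Matrix.mem_unitaryGroup_iff'.mp hM.eigenvectorUnitary.2

lemma aux_conj_psd {U : Matrix (Fin n) (Fin n) ℝ} {d : Fin n → ℝ}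
    (hd : ∀ i, 0 ≤ d i) : (U * diagonal d * star U).PosSemidef := by
  simpa [Matrix.star_eq_conjTranspose] using (Matrix.posSemidef_diagonal_iff.2 hd).mul_mul_conjTranspose_same U

lemma aux_diag_sub (d : Fin n → ℝ) (c : ℝ) :
    diagonal d - c • 1 = diagonal (fun i => d i - c) := by
  ext i j
  rcases eq_or_ne i j with h | h <;>
    simp [diagonal_apply, Matrix.sub_apply, Matrix.smul_apply, Matrix.one_apply, h]

lemma aux_smul_sub_diag (d : Fin n → ℝ) (c : ℝ) :
    c • 1 - diagonal d = diagonal (fun i => c - d i) := by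
  ext i j
  rcases eq_or_ne i j with h | h <;>
    simp [diagonal_apply, Matrix.sub_apply, Matrix.smul_apply, Matrix.one_apply, h]

lemma aux_one_add_diag (d : Fin n → ℝ) :
    (1 : Matrix (Fin n) (Fin n) ℝ) + diagonal d = diagonal (fun i => 1 + d i) := by
  ext i j
  rcases eq_or_ne i j with h | h <;>
    simp [diagonal_apply, Matrix.add_apply, Matrix.one_apply, h]

lemma aux_conj_sub_smul {U : Matrix (Fin n) (Fin n) ℝ} (hU1 : U * star U = 1)
    (d : Fin n → ℝ) (c : ℝ) :
    U * diagonal d * star U - c • 1 = U * diagonal (fun i => d i - c) * star U := by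
  rw [← aux_diag_sub, mul_sub, sub_mul, mul_smul_comm, smul_mul_assoc, mul_one, hU1]

lemma aux_smul_sub_conj {U : Matrix (Fin n) (Fin n) ℝ} (hU1 : U * star U = 1)
    (d : Fin n → ℝ) (c : ℝ) :
    c • 1 - U * diagonal d * star U = U * diagonal (fun i => c - d i) * star U := by
  rw [← aux_smul_sub_diag, mul_sub, sub_mul, mul_smul_comm, smul_mul_assoc, mul_one, hU1]

lemma aux_one_add_conj {U : Matrix (Fin n) (Fin n) ℝ} (hU1 : U * star U = 1)
    (d : Fin n → ℝ) :
    (1 : Matrix (Fin n) (Fin n) ℝ) + U * diagonal d * star U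
      = U * diagonal (fun i => 1 + d i) * star U := by
  rw [← aux_one_add_diag, mul_add, add_mul, mul_one, hU1]

lemma aux_conj_inv {U : Matrix (Fin n) (Fin n) ℝ} (hU1 : U * star U = 1)
    (hU2 : star U * U = 1) {d : Fin n → ℝ} (hd : ∀ i, d i ≠ 0) :
    (U * diagonal d * star U)⁻¹ = U * diagonal (fun i => (d i)⁻¹) * star U := by
  apply Matrix.inv_eq_left_inv
  have : (U * diagonal (fun i => (d i)⁻¹) * star U) * (U * diagonal d * star U)
      = U * (diagonal (fun i => (d i)⁻¹) * (star U * U) * diagonal d) * star U := by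
    simp only [Matrix.mul_assoc]
  rw [this, hU2, mul_one, diagonal_mul_diagonal]
  have hdd : (fun i => (d i)⁻¹ * d i) = fun _ : Fin n => (1 : ℝ) := by
    funext i; exact inv_mul_cancel₀ (hd i)
  rw [hdd, diagonal_one, mul_one, hU1]

lemma aux_shift_psd {M : Matrix (Fin n) (Fin n) ℝ} (hM : M.IsHermitian) {c : ℝ}
    (h : ∀ i, c ≤ hM.eigenvalues i) : (M - c • 1).PosSemidef := by
  obtain ⟨U, hU1, hU2, hspec⟩ := aux_spectral hM
  rw [hspec, aux_conj_sub_smul hU1]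
  exact aux_conj_psd fun i => by linarith [h i]

lemma aux_psd_shift {M : Matrix (Fin n) (Fin n) ℝ} (hM : M.IsHermitian) {c : ℝ}
    (h : (M - c • 1).PosSemidef) : ∀ i, c ≤ hM.eigenvalues i := by
  intro i
  have h2 : (star (hM.eigenvectorUnitary : Matrix (Fin n) (Fin n) ℝ) * (M - c • 1) *
      (hM.eigenvectorUnitary : Matrix (Fin n) (Fin n) ℝ)).PosSemidef := by
    simpa [Matrix.star_eq_conjTranspose] using h.conjTranspose_mul_mul_same (hM.eigenvectorUnitary : Matrix (Fin n) (Fin n) ℝ)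
  have hU2 : star (hM.eigenvectorUnitary : Matrix (Fin n) (Fin n) ℝ) *
      (hM.eigenvectorUnitary : Matrix (Fin n) (Fin n) ℝ) = 1 :=
    Matrix.mem_unitaryGroup_iff'.mp hM.eigenvectorUnitary.2
  have hdiag : star (hM.eigenvectorUnitary : Matrix (Fin n) (Fin n) ℝ) * (M - c • 1) *
      (hM.eigenvectorUnitary : Matrix (Fin n) (Fin n) ℝ)
      = diagonal (fun i => hM.eigenvalues i - c) := by
    rw [mul_sub, sub_mul, ← aux_diag_sub]
    congr 1
    · have hsp : M = (hM.eigenvectorUnitary : Matrix (Fin n) (Fin n) ℝ) * diagonal hM.eigenvalues * star (hM.eigenvectorUnitary : Matrix (Fin n) (Fin n) ℝ) := by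
        simpa using hM.spectral_theorem
      calc star (hM.eigenvectorUnitary : Matrix (Fin n) (Fin n) ℝ) * M * (hM.eigenvectorUnitary : Matrix (Fin n) (Fin n) ℝ)
          = star (hM.eigenvectorUnitary : Matrix (Fin n) (Fin n) ℝ) * ((hM.eigenvectorUnitary : Matrix (Fin n) (Fin n) ℝ) * diagonal hM.eigenvalues * star (hM.eigenvectorUnitary : Matrix (Fin n) (Fin n) ℝ)) * (hM.eigenvectorUnitary : Matrix (Fin n) (Fin n) ℝ) := by rw [← hsp]
        _ = (star (hM.eigenvectorUnitary : Matrix (Fin n) (Fin n) ℝ) * (hM.eigenvectorUnitary : Matrix (Fin n) (Fin n) ℝ)) * diagonal hM.eigenvalues * (star (hM.eigenvectorUnitary : Matrix (Fin n) (Fin n) ℝ) * (hM.eigenvectorUnitary : Matrix (Fin n) (Fin n) ℝ)) := by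
          simp only [Matrix.mul_assoc]
        _ = _ := by rw [hU2, Matrix.one_mul, Matrix.mul_one]
    · rw [mul_smul_comm, smul_mul_assoc, mul_one, hU2]
  rw [hdiag] at h2
  have := Matrix.posSemidef_diagonal_iff.mp h2 i
  linarith

lemma aux_quad_lower {M : Matrix (Fin n) (Fin n) ℝ} {c : ℝ}
    (h : (M - c • 1).PosSemidef) (x : Fin n → ℝ) :
    c * (x ⬝ᵥ x) ≤ x ⬝ᵥ M *ᵥ x := by
  have := h.dotProduct_mulVec_nonneg x
  simp only [sub_mulVec, smul_mulVec, one_mulVec, dotProduct_sub, dotProduct_smul,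
    star_trivial, smul_eq_mul] at this
  linarith

lemma aux_quad_upper {M : Matrix (Fin n) (Fin n) ℝ} {c : ℝ}
    (h : (c • 1 - M).PosSemidef) (x : Fin n → ℝ) :
    x ⬝ᵥ M *ᵥ x ≤ c * (x ⬝ᵥ x) := by
  have := h.dotProduct_mulVec_nonneg x
  simp only [sub_mulVec, smul_mulVec, one_mulVec, dotProduct_sub, dotProduct_smul,
    star_trivial, smul_eq_mul] at this
  linarith

lemma aux_quad_nonneg {M : Matrix (Fin n) (Fin n) ℝ} (h : M.PosSemidef) (x : Fin n → ℝ) :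
    0 ≤ x ⬝ᵥ M *ᵥ x := by simpa using h.dotProduct_mulVec_nonneg x

lemma aux_quad_conj (P R : Matrix (Fin n) (Fin n) ℝ) (w : Fin n → ℝ) :
    w ⬝ᵥ (Rᵀ * P * R) *ᵥ w = (R *ᵥ w) ⬝ᵥ P *ᵥ (R *ᵥ w) := by
  rw [← mulVec_mulVec, ← mulVec_mulVec, dotProduct_mulVec, vecMul_transpose]

lemma aux_real_conjT {m k : ℕ} (M : Matrix (Fin m) (Fin k) ℝ) : Mᴴ = Mᵀ := by simp

lemma aux_psd_smul {M : Matrix (Fin n) (Fin n) ℝ} (h : M.PosSemidef) {c : ℝ} (hc : 0 ≤ c) :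
    (c • M).PosSemidef := by
  exact h.smul hc

end Aux

set_option maxHeartbeats 1000000 in
/-- With `ξ* = λ_K(A ΣZY Aᵀ) / λ_1(ΣW)`: `λ_K(H) ≥ ξ*` and
`Δ² ≥ Δx² ≥ Δ² ξ*/(1+ξ*)`. -/
theorem stmt9 {p K : ℕ} (hp : 0 < p) (hK : 0 < K)
    (A : Matrix (Fin p) (Fin K) ℝ) (hA : A.rank = K)
    (SZY : Matrix (Fin K) (Fin K) ℝ) (hZY : SZY.PosDef)
    (SW : Matrix (Fin p) (Fin p) ℝ) (hW : SW.PosDef)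
    (α0 α1 : Fin K → ℝ)
    (R : Matrix (Fin K) (Fin K) ℝ) (hR : R = (hZY.posSemidef.1.eigenvectorUnitary : Matrix (Fin K) (Fin K) ℝ) *
      diagonal ((↑) ∘ (√·) ∘ hZY.posSemidef.1.eigenvalues) *
      (star hZY.posSemidef.1.eigenvectorUnitary : Matrix (Fin K) (Fin K) ℝ))
    (H : Matrix (Fin K) (Fin K) ℝ) (hH : H = R * Aᵀ * SW⁻¹ * A * R)
    (hHerm : H.IsHermitian)
    (G : Matrix (Fin K) (Fin K) ℝ) (hG : G = R * Aᵀ * A * R)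
    (hGerm : G.IsHermitian)
    (Δ2 Δx2 ξ : ℝ)
    (hΔ2 : Δ2 = (α1 - α0) ⬝ᵥ SZY⁻¹.mulVec (α1 - α0))
    (hΔx2 : Δx2 = (α1 - α0) ⬝ᵥ (Aᵀ * (A * SZY * Aᵀ + SW)⁻¹ * A).mulVec (α1 - α0))
    (hξ : ξ = (⨅ i, hGerm.eigenvalues i) / (⨆ i, hW.1.eigenvalues i)) :
    ξ ≤ (⨅ i, hHerm.eigenvalues i) ∧ Δx2 ≤ Δ2 ∧ Δ2 * (ξ / (1 + ξ)) ≤ Δx2 := by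
  haveI : Nonempty (Fin p) := ⟨⟨0, hp⟩⟩
  haveI : Nonempty (Fin K) := ⟨⟨0, hK⟩⟩
  -- basic facts about R
  have hRpsd : R.PosSemidef := hR ▸ aux_conj_psd fun i => by simp [Real.sqrt_nonneg]
  have hRt : Rᵀ = R := by rw [← aux_real_conjT R]; exact hRpsd.1
  have hRR : R * R = SZY := by
    have hU2 : star (hZY.posSemidef.1.eigenvectorUnitary : Matrix (Fin K) (Fin K) ℝ) *
        (hZY.posSemidef.1.eigenvectorUnitary : Matrix (Fin K) (Fin K) ℝ) = 1 :=
      Matrix.mem_unitaryGroup_iff'.mp hZY.posSemidef.1.eigenvectorUnitary.2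
    have hsp : SZY = (hZY.posSemidef.1.eigenvectorUnitary : Matrix (Fin K) (Fin K) ℝ) *
        diagonal hZY.posSemidef.1.eigenvalues *
        star (hZY.posSemidef.1.eigenvectorUnitary : Matrix (Fin K) (Fin K) ℝ) := by
      simpa using hZY.posSemidef.1.spectral_theorem
    rw [hR]
    conv_rhs => rw [hsp]
    simp only [Matrix.mul_assoc]
    rw [← Matrix.mul_assoc (star (hZY.posSemidef.1.eigenvectorUnitary : Matrix (Fin K) (Fin K) ℝ))
      (hZY.posSemidef.1.eigenvectorUnitary : Matrix (Fin K) (Fin K) ℝ), hU2, Matrix.one_mul,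
      ← Matrix.mul_assoc (diagonal _) (diagonal _), diagonal_mul_diagonal]
    congr 2
    exact congrArg diagonal (funext fun i => by
      simp [Real.mul_self_sqrt (hZY.posSemidef.eigenvalues_nonneg i)])
  have hdetR : IsUnit R.det := by
    have h1 : R.det * R.det = SZY.det := by rw [← det_mul, hRR]
    have h2 : 0 < SZY.det := hZY.det_pos
    refine isUnit_iff_ne_zero.2 fun h => ?_
    rw [h, mul_zero] at h1; rw [← h1] at h2; exact lt_irrefl _ h2
  have hRiR : R⁻¹ * R = 1 := Matrix.nonsing_inv_mul R hdetR
  have hRRi : R * R⁻¹ = 1 := Matrix.mul_nonsing_inv R hdetR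
  have hRit : (R⁻¹)ᵀ = R⁻¹ := by rw [Matrix.transpose_nonsing_inv, hRt]
  -- B and N
  set B := A * R with hB
  have hBt : Bᵀ = R * Aᵀ := by rw [hB, transpose_mul, hRt]
  set N := A * SZY * Aᵀ + SW with hN
  have hNBB : N = B * Bᵀ + SW := by
    rw [hN, hB, hBt, ← hRR]
    congr 1
    simp only [Matrix.mul_assoc]
  have hHB : H = Bᵀ * SW⁻¹ * B := by
    rw [hH, hBt, hB]
    simp only [Matrix.mul_assoc]
  have hGB : G = Bᵀ * B := by
    rw [hG, hBt, hB]
    simp only [Matrix.mul_assoc]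
  have hWinv : SW⁻¹.PosDef := hW.inv
  have hHpsd : H.PosSemidef := by
    rw [hHB, ← aux_real_conjT B]
    exact hWinv.posSemidef.conjTranspose_mul_mul_same B
  have hGpsd : G.PosSemidef := by
    rw [hGB, ← aux_real_conjT B]
    exact Matrix.posSemidef_conjTranspose_mul_self B
  have hNpd : N.PosDef := by
    rw [hNBB]
    refine Matrix.PosDef.posSemidef_add ?_ hW
    rw [← aux_real_conjT B]
    exact Matrix.posSemidef_self_mul_conjTranspose B
  have hdetN : IsUnit N.det := isUnit_iff_ne_zero.2 (ne_of_gt hNpd.det_pos)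
  have hdetW : IsUnit SW.det := isUnit_iff_ne_zero.2 (ne_of_gt hW.det_pos)
  have h1Hpd : (1 + H).PosDef := Matrix.PosDef.add_posSemidef Matrix.PosDef.one hHpsd
  have hdet1H : IsUnit (1 + H).det := isUnit_iff_ne_zero.2 (ne_of_gt h1Hpd.det_pos)
  -- ξ components
  set g := ⨅ i, hGerm.eigenvalues i with hg
  set s := ⨆ i, hW.1.eigenvalues i with hs
  have hW_ev_pos : ∀ i, 0 < hW.1.eigenvalues i := fun i => hW.eigenvalues_pos i
  have hW_ev_le : ∀ i, hW.1.eigenvalues i ≤ s :=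
    fun i => le_ciSup (Set.Finite.bddAbove (Set.finite_range _)) i
  have hs_pos : 0 < s := lt_of_lt_of_le (hW_ev_pos ⟨0, hp⟩) (hW_ev_le ⟨0, hp⟩)
  have hG_ev_nonneg : ∀ i, 0 ≤ hGerm.eigenvalues i := fun i => hGpsd.eigenvalues_nonneg i
  have hg_nonneg : 0 ≤ g := le_ciInf hG_ev_nonneg
  have hg_le : ∀ i, g ≤ hGerm.eigenvalues i :=
    fun i => ciInf_le (Set.Finite.bddBelow (Set.finite_range _)) i
  have hξ0 : 0 ≤ ξ := hξ ▸ div_nonneg hg_nonneg hs_pos.le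
  -- Step 1: (SW⁻¹ - s⁻¹ • 1) is PSD
  obtain ⟨UW, hUW1, hUW2, hWspec⟩ := aux_spectral hW.1
  have hWinv_spec : SW⁻¹ = UW * diagonal (fun i => (hW.1.eigenvalues i)⁻¹) * star UW := by
    conv_lhs => rw [hWspec]
    exact aux_conj_inv hUW1 hUW2 fun i => ne_of_gt (hW_ev_pos i)
  have hPpsd : (SW⁻¹ - s⁻¹ • 1).PosSemidef := by
    rw [hWinv_spec, aux_conj_sub_smul hUW1]
    refine aux_conj_psd fun i => sub_nonneg.2 ?_
    exact inv_anti₀ (hW_ev_pos i) (hW_ev_le i)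
  -- Step 2: H - ξ • 1 is PSD
  have hHsub : H - s⁻¹ • G = Bᵀ * (SW⁻¹ - s⁻¹ • 1) * B := by
    rw [hHB, hGB, Matrix.mul_sub, Matrix.sub_mul, Matrix.mul_smul, Matrix.smul_mul,
      Matrix.mul_one]
  have hHsub_psd : (H - s⁻¹ • G).PosSemidef := by
    rw [hHsub, ← aux_real_conjT B]
    exact hPpsd.conjTranspose_mul_mul_same B
  have hGsub_psd : (s⁻¹ • G - ξ • 1).PosSemidef := by
    have h1 : s⁻¹ • (G - g • 1) = s⁻¹ • G - ξ • 1 := by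
      rw [smul_sub, smul_smul, hξ, div_eq_inv_mul]
    rw [← h1]
    exact aux_psd_smul (aux_shift_psd hGerm hg_le) (inv_nonneg.2 hs_pos.le)
  have hHshift : (H - ξ • 1).PosSemidef := by
    have : H - ξ • 1 = (H - s⁻¹ • G) + (s⁻¹ • G - ξ • 1) := by abel
    rw [this]; exact hHsub_psd.add hGsub_psd
  have hH_ev : ∀ i, ξ ≤ hHerm.eigenvalues i := aux_psd_shift hHerm hHshift
  have part1 : ξ ≤ ⨅ i, hHerm.eigenvalues i := le_ciInf hH_ev
  -- Woodbury: Bᵀ * N⁻¹ * B = H * (1+H)⁻¹ = 1 - (1+H)⁻¹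
  have key1 : N * (SW⁻¹ * B) = B * (1 + H) := by
    rw [hNBB, Matrix.add_mul, Matrix.mul_add, Matrix.mul_one, hHB,
      ← Matrix.mul_assoc SW SW⁻¹ B, Matrix.mul_nonsing_inv SW hdetW, Matrix.one_mul]
    rw [add_comm]
    congr 1
    simp only [Matrix.mul_assoc]
  have key2 : SW⁻¹ * B = N⁻¹ * B * (1 + H) := by
    have := congrArg (fun X => N⁻¹ * X) key1
    simpa only [← Matrix.mul_assoc, Matrix.nonsing_inv_mul N hdetN, one_mul] using this
  have key3 : N⁻¹ * B = SW⁻¹ * B * (1 + H)⁻¹ := by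
    have h := congrArg (fun X => X * (1 + H)⁻¹) key2
    simp only [Matrix.mul_assoc, Matrix.mul_nonsing_inv _ hdet1H, Matrix.mul_one] at h
    rw [Matrix.mul_assoc]
    exact h.symm
  have key4 : Bᵀ * N⁻¹ * B = H * (1 + H)⁻¹ := by
    rw [Matrix.mul_assoc, key3, hHB]
    simp only [Matrix.mul_assoc]
  have hT : H * (1 + H)⁻¹ = 1 - (1 + H)⁻¹ := by
    have h1 : (1 + H) * (1 + H)⁻¹ = 1 := Matrix.mul_nonsing_inv _ hdet1H
    rw [add_mul, one_mul] at h1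
    linear_combination (norm := noncomm_ring) h1
  -- quadratic form computations
  set v := α1 - α0 with hv
  set w := R⁻¹ *ᵥ v with hw
  have hΔ2w : Δ2 = w ⬝ᵥ w := by
    have hSZYinv : SZY⁻¹ = (R⁻¹)ᵀ * 1 * R⁻¹ := by
      rw [← hRR, Matrix.mul_inv_rev, hRit, mul_one]
    rw [hΔ2, hSZYinv, aux_quad_conj 1 R⁻¹ v, one_mulVec]
  have h0 : R * (Aᵀ * N⁻¹ * A) * R = H * (1 + H)⁻¹ := by
    rw [← key4, hBt, hB]
    simp only [Matrix.mul_assoc]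
  have hANA : Aᵀ * N⁻¹ * A = (R⁻¹)ᵀ * (H * (1 + H)⁻¹) * R⁻¹ := by
    rw [hRit]
    calc Aᵀ * N⁻¹ * A = (R⁻¹ * R) * (Aᵀ * N⁻¹ * A) * (R * R⁻¹) := by
          rw [hRiR, hRRi, Matrix.one_mul, Matrix.mul_one]
      _ = R⁻¹ * (R * (Aᵀ * N⁻¹ * A) * R) * R⁻¹ := by simp only [Matrix.mul_assoc]
      _ = R⁻¹ * (H * (1 + H)⁻¹) * R⁻¹ := by rw [h0]
  have hΔx2w : Δx2 = w ⬝ᵥ w - w ⬝ᵥ (1 + H)⁻¹ *ᵥ w := by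
    rw [hΔx2, hANA, aux_quad_conj _ R⁻¹ v, hT, sub_mulVec, one_mulVec, dotProduct_sub]
  -- bounds
  have h1H_inv_pd : ((1 + H)⁻¹).PosDef := h1Hpd.inv
  have upper : Δx2 ≤ Δ2 := by
    rw [hΔx2w, hΔ2w]
    have := aux_quad_nonneg h1H_inv_pd.posSemidef w
    linarith
  -- lower bound
  obtain ⟨UH, hUH1, hUH2, hHspec⟩ := aux_spectral hHerm
  have h1H_spec : 1 + H = UH * diagonal (fun i => 1 + hHerm.eigenvalues i) * star UH := by
    conv_lhs => rw [hHspec]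
    rw [aux_one_add_conj hUH1]
  have h1H_inv_spec : (1 + H)⁻¹
      = UH * diagonal (fun i => (1 + hHerm.eigenvalues i)⁻¹) * star UH := by
    rw [h1H_spec]
    exact aux_conj_inv hUH1 hUH2 fun i => ne_of_gt (by have := hH_ev i; linarith)
  have hbound : ((1 + ξ)⁻¹ • 1 - (1 + H)⁻¹).PosSemidef := by
    rw [h1H_inv_spec, aux_smul_sub_conj hUH1]
    refine aux_conj_psd fun i => sub_nonneg.2 ?_
    have h1 : 0 < 1 + ξ := by linarith
    exact inv_anti₀ h1 (by linarith [hH_ev i])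
  have hquad : w ⬝ᵥ (1 + H)⁻¹ *ᵥ w ≤ (1 + ξ)⁻¹ * (w ⬝ᵥ w) := aux_quad_upper hbound w
  have lower : Δ2 * (ξ / (1 + ξ)) ≤ Δx2 := by
    rw [hΔx2w, hΔ2w]
    have h1 : (0:ℝ) < 1 + ξ := by linarith
    have h2 : ξ / (1 + ξ) = 1 - (1 + ξ)⁻¹ := by field_simp; ring
    rw [h2]
    nlinarith [hquad]
  exact ⟨part1, upper, lower⟩
end

section
/- Let $\Phi$ and $\varphi$ denote the standard normal c.d.f. and density. Let $\Delta \ge \Delta_x \ge 0$ with $\Delta^2 - \Delta_x^2 \le \Delta^2/(1+\lambda)$ for some $\lambda \ge 0$, and $\Delta_x^2 \ge \Delta^2\lambda/(1+\lambda)$. Then $\Phi(\Delta/2) - \Phi(\Delta_x/2) \le \frac{1}{2\sqrt{2\pi}}\cdot\frac{\Delta}{1+\lambda}\exp\!\big(-\frac{\lambda}{8(1+\lambda)}\Delta^2\big)$. -/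
/-- The standard normal cumulative distribution function. -/
noncomputable def stdNormalCDF (x : ℝ) : ℝ :=
  ∫ t in Set.Iic x, Real.exp (-t ^ 2 / 2) / Real.sqrt (2 * Real.pi)

lemma gaussInt : MeasureTheory.Integrable
    (fun t : ℝ => Real.exp (-t ^ 2 / 2) / Real.sqrt (2 * Real.pi)) := by
  have h : MeasureTheory.Integrable (fun t : ℝ => Real.exp (-(1/2) * t ^ 2)) :=
    integrable_exp_neg_mul_sq (by norm_num)
  have := h.div_const (Real.sqrt (2 * Real.pi))
  convert this using 2 with t
  ring_nf

lemma gap_eq (a b : ℝ) (hab : a ≤ b) :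
    stdNormalCDF b - stdNormalCDF a
      = ∫ t in Set.Ioc a b, Real.exp (-t ^ 2 / 2) / Real.sqrt (2 * Real.pi) := by
  unfold stdNormalCDF
  rw [intervalIntegral.integral_Iic_sub_Iic gaussInt.integrableOn gaussInt.integrableOn,
    intervalIntegral.integral_of_le hab]

lemma gap_le (a b : ℝ) (ha : 0 ≤ a) (hab : a ≤ b) :
    stdNormalCDF b - stdNormalCDF a
      ≤ (b - a) * (Real.exp (-a ^ 2 / 2) / Real.sqrt (2 * Real.pi)) := by
  rw [gap_eq a b hab]
  have hb : ∫ t in Set.Ioc a b, Real.exp (-a ^ 2 / 2) / Real.sqrt (2 * Real.pi)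
      = (b - a) * (Real.exp (-a ^ 2 / 2) / Real.sqrt (2 * Real.pi)) := by
    rw [MeasureTheory.setIntegral_const, Real.volume_real_Ioc_of_le hab, smul_eq_mul]
  rw [← hb]
  apply MeasureTheory.setIntegral_mono_on gaussInt.integrableOn
    (MeasureTheory.integrableOn_const (by simp [Real.volume_Ioc]))
    measurableSet_Ioc
  intro t ht
  have h1 : a ^ 2 ≤ t ^ 2 := by nlinarith [ht.1.le, ht.2]
  have hπ : 0 < Real.sqrt (2 * Real.pi) := Real.sqrt_pos.2 (by positivity)
  gcongr

/-- Upper bound on the gap of normal CDFs: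
`Φ(Δ/2) - Φ(Δx/2) ≤ (1/(2√(2π))) (Δ/(1+λ)) exp(-λΔ²/(8(1+λ)))`. -/
theorem stmt10 (Δ Δx lam : ℝ) (hx0 : 0 ≤ Δx) (hxle : Δx ≤ Δ) (hlam : 0 ≤ lam)
    (h1 : Δ ^ 2 - Δx ^ 2 ≤ Δ ^ 2 / (1 + lam))
    (h2 : Δ ^ 2 * lam / (1 + lam) ≤ Δx ^ 2) :
    stdNormalCDF (Δ / 2) - stdNormalCDF (Δx / 2)
      ≤ (1 / (2 * Real.sqrt (2 * Real.pi))) * (Δ / (1 + lam))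
        * Real.exp (-(lam * Δ ^ 2) / (8 * (1 + lam))) := by
  have hl1 : (0:ℝ) < 1 + lam := by linarith
  have hπ : 0 < Real.sqrt (2 * Real.pi) := Real.sqrt_pos.2 (by positivity)
  have key := gap_le (Δx / 2) (Δ / 2) (by linarith) (by linarith)
  refine key.trans ?_
  have hd : Δ / 2 - Δx / 2 ≤ (Δ / (1 + lam)) / 2 := by
    have h1' : (Δ ^ 2 - Δx ^ 2) * (1 + lam) ≤ Δ ^ 2 := (le_div_iff₀ hl1).1 h1
    have hd' : (Δ - Δx) * (1 + lam) ≤ Δ := by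
      nlinarith [h1', mul_nonneg (mul_nonneg (sub_nonneg.2 hxle) hx0) hl1.le,
        mul_nonneg hx0 hl1.le]
    rw [div_div, le_div_iff₀ (by positivity : (0:ℝ) < (1 + lam) * 2)]
    nlinarith [hd']
  have he : Real.exp (-(Δx / 2) ^ 2 / 2)
      ≤ Real.exp (-(lam * Δ ^ 2) / (8 * (1 + lam))) := by
    apply Real.exp_le_exp.2
    have h2' : lam * Δ ^ 2 ≤ Δx ^ 2 * (1 + lam) := by
      rw [div_le_iff₀ hl1] at h2; nlinarith [h2]
    rw [div_le_div_iff₀ (by norm_num : (0:ℝ) < 2) (by positivity : (0:ℝ) < 8 * (1 + lam))]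
    nlinarith [h2']
  calc (Δ / 2 - Δx / 2) * (Real.exp (-(Δx / 2) ^ 2 / 2) / Real.sqrt (2 * Real.pi))
      ≤ ((Δ / (1 + lam)) / 2) * (Real.exp (-(lam * Δ ^ 2) / (8 * (1 + lam))) / Real.sqrt (2 * Real.pi)) := by
        apply mul_le_mul hd (by gcongr) (by positivity) ?_
        have : (0:ℝ) ≤ Δ := le_trans hx0 hxle
        positivity
    _ = (1 / (2 * Real.sqrt (2 * Real.pi))) * (Δ / (1 + lam))
        * Real.exp (-(lam * Δ ^ 2) / (8 * (1 + lam))) := by ring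
end

section
/- (Hypercube packing of unit vectors.) For every integer $m\ge 1$ there exist unit vectors $J^{(1)},\dots,J^{(M)} \in \mathbb{R}^m$ (i.e., $\|J^{(i)}\|_2=1$) such that: (1) $\|J^{(i)}-J^{(j)}\|_2^2 \ge 1/4$ for all $i\ne j$, and (2) $\log M \ge \max\{cm, \log m\}$ for an absolute constant $c > 1/30$. -/
open Matrix

namespace Stmt18Aux

open Finset

variable {m : ℕ}

/-- Hamming distance between two boolean vectors. -/
def dH (x y : Fin m → Bool) : ℕ := #(Finset.univ.filter fun k => x k ≠ y k)

lemma dH_comm (x y : Fin m → Bool) : dH x y = dH y x := by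
  unfold dH; congr 1; ext k; simp [ne_comm]

lemma dH_self (x : Fin m → Bool) : dH x x = 0 := by simp [dH]

lemma sum_weight (x : Fin m → Bool) :
    ∑ w : Fin m → Bool, ∏ k, (if w k = x k then 15 else 1 : ℕ) = 16 ^ m := by
  classical
  rw [← Fintype.piFinset_univ,
    ← Finset.prod_univ_sum (fun _ : Fin m => (Finset.univ : Finset Bool))
      (fun k b => if b = x k then 15 else 1)]
  have h : ∀ k : Fin m, (∑ b : Bool, (if b = x k then 15 else 1 : ℕ)) = 16 := by
    intro k; cases hx : x k <;> simp [Fintype.sum_bool, hx]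
  rw [Finset.prod_congr rfl fun k _ => h k, Finset.prod_const, card_univ, Fintype.card_fin]

lemma ball_bound (x : Fin m → Bool) (r : ℕ) (hr : r ≤ m) :
    #(Finset.univ.filter fun w : Fin m → Bool => dH w x ≤ r) * 15 ^ (m - r) ≤ 16 ^ m := by
  classical
  have key : ∀ w : Fin m → Bool, dH w x ≤ r →
      15 ^ (m - r) ≤ ∏ k, (if w k = x k then 15 else 1 : ℕ) := by
    intro w hw
    have hprod : ∏ k, (if w k = x k then 15 else 1 : ℕ)
        = 15 ^ #(Finset.univ.filter fun k => w k = x k) := by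
      rw [Finset.prod_ite, Finset.prod_const, Finset.prod_const, one_pow, mul_one]
    have hcard : #(Finset.univ.filter fun k => w k = x k) + dH w x = m := by
      have := Finset.card_filter_add_card_filter_not
        (s := (Finset.univ : Finset (Fin m))) (p := fun k => w k = x k)
      simpa [dH, card_univ] using this
    rw [hprod]
    exact Nat.pow_le_pow_right (by norm_num) (by omega)
  calc #(Finset.univ.filter fun w : Fin m → Bool => dH w x ≤ r) * 15 ^ (m - r)
      = ∑ _w ∈ Finset.univ.filter fun w : Fin m → Bool => dH w x ≤ r, 15 ^ (m - r) := by
        rw [Finset.sum_const, smul_eq_mul]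
    _ ≤ ∑ w ∈ Finset.univ.filter fun w : Fin m → Bool => dH w x ≤ r,
          ∏ k, (if w k = x k then 15 else 1 : ℕ) := by
        refine Finset.sum_le_sum fun w hw => key w ?_
        simpa using hw
    _ ≤ ∑ w : Fin m → Bool, ∏ k, (if w k = x k then 15 else 1 : ℕ) :=
        Finset.sum_le_sum_of_subset (Finset.filter_subset _ _)
    _ = 16 ^ m := sum_weight x

lemma exists_code (m d : ℕ) (hd : 1 ≤ d) :
    ∃ C : Finset (Fin m → Bool),
      (∀ x ∈ C, ∀ y ∈ C, x ≠ y → d ≤ dH x y) ∧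
      ∀ v : Fin m → Bool, ∃ x ∈ C, dH v x ≤ d - 1 := by
  classical
  set P : Finset (Fin m → Bool) → Prop :=
    fun C => ∀ x ∈ C, ∀ y ∈ C, x ≠ y → d ≤ dH x y with hP
  obtain ⟨C, hCmem, hmax⟩ := Finset.exists_max_image
    (Finset.univ.filter P) Finset.card ⟨∅, by simp [hP]⟩
  have hPC : P C := (Finset.mem_filter.1 hCmem).2
  refine ⟨C, hPC, fun v => ?_⟩
  by_contra hcon
  push_neg at hcon
  have hvC : v ∉ C := by
    intro hv
    have := hcon v hv
    rw [dH_self] at this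
    omega
  have hfar : ∀ x ∈ C, d ≤ dH v x := fun x hx => by have := hcon x hx; omega
  have hPC' : P (insert v C) := by
    intro x hx0 y hy0 hxy
    rcases Finset.mem_insert.1 hx0 with hxv | hx
    · rcases Finset.mem_insert.1 hy0 with hyv | hy
      · exact absurd (hxv.trans hyv.symm) hxy
      · rw [hxv]; exact hfar y hy
    · rcases Finset.mem_insert.1 hy0 with hyv | hy
      · rw [hyv, dH_comm]; exact hfar x hx
      · exact hPC x hx y hy hxy
  have := hmax (insert v C) (Finset.mem_filter.2 ⟨Finset.mem_univ _, hPC'⟩)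
  rw [Finset.card_insert_of_notMem hvC] at this
  omega

lemma code_count (m d : ℕ) (hd : 1 ≤ d) (hdm : d ≤ m) :
    ∃ C : Finset (Fin m → Bool),
      (∀ x ∈ C, ∀ y ∈ C, x ≠ y → d ≤ dH x y) ∧
      2 ^ m * 15 ^ (m - (d - 1)) ≤ #C * 16 ^ m := by
  classical
  obtain ⟨C, h1, h2⟩ := exists_code m d hd
  refine ⟨C, h1, ?_⟩
  have hcover : (Finset.univ : Finset (Fin m → Bool)) ⊆
      C.biUnion fun x => Finset.univ.filter fun w => dH w x ≤ d - 1 := by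
    intro v _
    obtain ⟨x, hx, hxd⟩ := h2 v
    exact Finset.mem_biUnion.2 ⟨x, hx, Finset.mem_filter.2 ⟨Finset.mem_univ _, hxd⟩⟩
  have hcardV : #(Finset.univ : Finset (Fin m → Bool)) = 2 ^ m := by
    simp [card_univ]
  have h3 : 2 ^ m ≤ ∑ x ∈ C, #(Finset.univ.filter fun w : Fin m → Bool => dH w x ≤ d - 1) := by
    calc 2 ^ m = #(Finset.univ : Finset (Fin m → Bool)) := hcardV.symm
      _ ≤ #(C.biUnion fun x => Finset.univ.filter fun w => dH w x ≤ d - 1) :=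
          Finset.card_le_card hcover
      _ ≤ _ := Finset.card_biUnion_le
  calc 2 ^ m * 15 ^ (m - (d - 1))
      ≤ (∑ x ∈ C, #(Finset.univ.filter fun w : Fin m → Bool => dH w x ≤ d - 1)) * 15 ^ (m - (d - 1)) :=
        Nat.mul_le_mul_right _ h3
    _ = ∑ x ∈ C, #(Finset.univ.filter fun w : Fin m → Bool => dH w x ≤ d - 1) * 15 ^ (m - (d - 1)) :=
        Finset.sum_mul _ _ _
    _ ≤ ∑ _x ∈ C, 16 ^ m := Finset.sum_le_sum fun x _ => ball_bound x (d - 1) (by omega)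
    _ = #C * 16 ^ m := by rw [Finset.sum_const, smul_eq_mul]


/-- numeric: `2 + log 2 ≤ log 15` -/
lemma log15_lb : 2 + Real.log 2 ≤ Real.log 15 := by
  have h : (2 : ℝ) * Real.exp 1 ^ 2 ≤ 15 := by
    have := Real.exp_one_lt_d9
    nlinarith [Real.exp_pos 1]
  have h2 : Real.log (2 * Real.exp 1 ^ 2) ≤ Real.log 15 :=
    Real.log_le_log (by positivity) h
  rw [Real.log_mul (by norm_num) (by positivity), Real.log_pow, Real.log_exp] at h2
  push_cast at h2
  linarith

lemma kappa_lb : (0.44 : ℝ) ≤ (15 / 16) * Real.log 15 - 3 * Real.log 2 := by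
  have h1 := log15_lb
  have h2 := Real.log_two_lt_d9
  have h3 := Real.log_two_gt_d9
  nlinarith

lemma log_le_of_pos {x : ℝ} (hx : 0 < x) : Real.log x ≤ x / Real.exp 1 := by
  have h := Real.log_le_sub_one_of_pos (x := x / Real.exp 1) (by positivity)
  rw [Real.log_div (ne_of_gt hx) (by positivity), Real.log_exp] at h
  linarith

theorem main :
    ∃ c : ℝ, 1 / 30 < c ∧
      ∀ m : ℕ, 1 ≤ m →
        ∃ M : ℕ, ∃ J : Fin M → Fin m → ℝ,
          (∀ i, J i ⬝ᵥ J i = 1) ∧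
          (∀ i j, i ≠ j → (1 / 4 : ℝ) ≤ (J i - J j) ⬝ᵥ (J i - J j)) ∧
          max (c * m) (Real.log m) ≤ Real.log M := by
  classical
  refine ⟨1 / 29, by norm_num, fun m hm => ?_⟩
  set d : ℕ := (m + 15) / 16 with hd_def
  have hd1 : 1 ≤ d := by omega
  have hdm : d ≤ m := by omega
  have hd16 : m ≤ 16 * d := by omega
  have hr16 : 16 * (d - 1) ≤ m := by omega
  obtain ⟨C, hdist, hcount⟩ := code_count m d hd1 hdm
  set M : ℕ := #C with hM_def
  have e : Fin M ≃ C := (Finset.equivFin C).symm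
  set c : Fin M → Fin m → Bool := fun i => (e i : Fin m → Bool) with hc_def
  have hcinj : Function.Injective c := fun i j hij => e.injective (Subtype.ext hij)
  have hcmem : ∀ i, c i ∈ C := fun i => (e i).2
  have hm0 : (0 : ℝ) < m := by exact_mod_cast hm
  set s : ℝ := Real.sqrt m with hs_def
  have hss : s * s = m := Real.mul_self_sqrt hm0.le
  have hs0 : s ≠ 0 := by
    intro h; rw [h, mul_zero] at hss; linarith
  set J : Fin M → Fin m → ℝ := fun i k => if c i k then 1 / s else -(1 / s) with hJ_def
  refine ⟨M, J, ?_, ?_, ?_⟩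
  · -- unit norm
    intro i
    have hterm : ∀ k, J i k * J i k = 1 / m := by
      intro k
      have : (1 / s) * (1 / s) = 1 / m := by
        rw [div_mul_div_comm, one_mul, hss]
      simp only [hJ_def]
      cases c i k <;> simpa using this
    rw [dotProduct, Finset.sum_congr rfl fun k _ => hterm k, Finset.sum_const,
      Finset.card_univ, Fintype.card_fin, nsmul_eq_mul]
    field_simp
  · -- pairwise distance
    intro i j hij
    have h4 : (1 / s + 1 / s) * (1 / s + 1 / s) = 4 / (m : ℝ) := by
      rw [← hss]; field_simp; ring
    have hterm : ∀ k, (J i - J j) k * (J i - J j) k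
        = if c i k ≠ c j k then (4 / m : ℝ) else 0 := by
      intro k
      simp only [Pi.sub_apply, hJ_def]
      cases hik : c i k <;> cases hjk : c j k <;>
        simp only [hik, hjk, ne_eq, if_true, if_false, Bool.false_eq_true,
          Bool.true_eq_false, not_false_eq_true, not_true_eq_false, ite_true, ite_false]
      · ring
      · linear_combination h4
      · linear_combination h4
      · ring
    have hsum : (J i - J j) ⬝ᵥ (J i - J j) = (dH (c i) (c j) : ℝ) * (4 / m) := by
      rw [dotProduct, Finset.sum_congr rfl fun k _ => hterm k, ← Finset.sum_filter,
        Finset.sum_const, nsmul_eq_mul, dH]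
    have hd_le : d ≤ dH (c i) (c j) :=
      hdist (c i) (hcmem i) (c j) (hcmem j) fun h => hij (hcinj h)
    have hdr : (m : ℝ) ≤ 16 * dH (c i) (c j) := by
      exact_mod_cast le_trans hd16 (by omega)
    rw [hsum, mul_div_assoc', le_div_iff₀ hm0]
    linarith [hdr]
  · -- log bound
    have hMreal : (2 : ℝ) ^ m * 15 ^ (m - (d - 1)) ≤ M * 16 ^ m := by
      exact_mod_cast hcount
    have h16pos : (0 : ℝ) < 16 ^ m := by positivity
    have hMpos : (0 : ℝ) < M := by
      rcases Nat.eq_zero_or_pos M with h | h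
      · exfalso
        rw [h, Nat.zero_mul] at hcount
        have h0 : 0 < 2 ^ m * 15 ^ (m - (d - 1)) := by positivity
        omega
      · exact_mod_cast h
    have hquot : (2 : ℝ) ^ m * 15 ^ (m - (d - 1)) / 16 ^ m ≤ M := by
      rw [div_le_iff₀ h16pos]; exact hMreal
    have hlog : Real.log ((2 : ℝ) ^ m * 15 ^ (m - (d - 1)) / 16 ^ m) ≤ Real.log M :=
      Real.log_le_log (by positivity) hquot
    have hexpand : Real.log ((2 : ℝ) ^ m * 15 ^ (m - (d - 1)) / 16 ^ m)
        = m * Real.log 2 + (m - (d - 1) : ℕ) * Real.log 15 - m * Real.log 16 := by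
      rw [Real.log_div (by positivity) (by positivity),
        Real.log_mul (by positivity) (by positivity), Real.log_pow, Real.log_pow, Real.log_pow]
    have hlog16 : Real.log 16 = 4 * Real.log 2 := by
      rw [show (16 : ℝ) = 2 ^ 4 by norm_num, Real.log_pow]; push_cast; ring
    have hmr : (15 / 16 : ℝ) * m ≤ ((m - (d - 1) : ℕ) : ℝ) := by
      have h1 : ((m - (d - 1) : ℕ) : ℝ) = (m : ℝ) - ((d - 1 : ℕ) : ℝ) := by
        have : (d - 1 : ℕ) ≤ m := by omega
        push_cast [Nat.cast_sub this]; ring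
      have h2 : 16 * ((d - 1 : ℕ) : ℝ) ≤ m := by exact_mod_cast hr16
      rw [h1]; linarith
    have hlog15 : (0 : ℝ) ≤ Real.log 15 := Real.log_nonneg (by norm_num)
    have hkey : (0.44 : ℝ) * m ≤ Real.log M := by
      have := kappa_lb
      have hstep : (0.44 : ℝ) * m ≤ m * Real.log 2 + ((m - (d - 1) : ℕ) : ℝ) * Real.log 15
          - m * Real.log 16 := by
        rw [hlog16]
        have h5 : (15 / 16 : ℝ) * m * Real.log 15 ≤ ((m - (d - 1) : ℕ) : ℝ) * Real.log 15 :=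
          mul_le_mul_of_nonneg_right hmr hlog15
        nlinarith [hm0]
      calc (0.44 : ℝ) * m ≤ _ := hstep
        _ = Real.log ((2 : ℝ) ^ m * 15 ^ (m - (d - 1)) / 16 ^ m) := hexpand.symm
        _ ≤ Real.log M := hlog
    refine max_le ?_ ?_
    · nlinarith [hm0]
    · have h1 : Real.log m ≤ m / Real.exp 1 := log_le_of_pos hm0
      have h2 : (2.7182818283 : ℝ) < Real.exp 1 := Real.exp_one_gt_d9
      have h3 : (m : ℝ) / Real.exp 1 ≤ m / 2.7182818283 :=
        div_le_div_of_nonneg_left hm0.le (by norm_num) h2.le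
      have h4 : (m : ℝ) / 2.7182818283 ≤ 0.44 * m := by
        rw [div_le_iff₀ (by norm_num)]
        nlinarith [hm0]
      linarith [h1, h3, h4, hkey]

end Stmt18Aux

/-- Hypercube packing of unit vectors: there is an absolute constant `c > 1/30` such
that for every `m ≥ 1` there exist unit vectors `J⁽¹⁾, …, J⁽ᴹ⁾ ∈ ℝᵐ` with
pairwise squared distances at least `1/4` and `log M ≥ max{c m, log m}`. -/
theorem stmt18 :
    ∃ c : ℝ, 1 / 30 < c ∧
      ∀ m : ℕ, 1 ≤ m →
        ∃ M : ℕ, ∃ J : Fin M → Fin m → ℝ,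
          (∀ i, J i ⬝ᵥ J i = 1) ∧
          (∀ i j, i ≠ j → (1 / 4 : ℝ) ≤ (J i - J j) ⬝ᵥ (J i - J j)) ∧
          max (c * m) (Real.log m) ≤ Real.log M :=
  Stmt18Aux.main
end
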